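/- Let X_1, …, X_n be independent nonnegative discrete random variables with pmfs f_i on finite S, and let A be a selection procedure satisfying Pr[A selects i | X_i = x] = p(x) for all i and x (IIF with probability function p). Then the expected value of the selected candidate equals ∑_{i=1}^n ∑_{x∈S} x·f_i(x)·p(x). In particular, all IIF selection rules with the same probability function p have the same expected performance. -/

import Mathlib

open Finset MeasureTheory ProbabilityTheory

/-- IIF objective lemma (Lemma 1): any selection procedure that is IIF with
probability function `p` has expected selected value
`∑ i ∑ x x·f_i(x)·p(x)`; in particular this depends only on `p`. -/
theorem stmt_16 {Ω : Type*} [MeasurableSpace Ω] (μ : Measure Ω)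
    [IsProbabilityMeasure μ]
    (n : ℕ) (S : Finset ℝ) (hS : ∀ x ∈ S, 0 ≤ x)
    (X : Fin n → Ω → ℝ) (hmX : ∀ i, Measurable (X i))
    (hsupp : ∀ᵐ ω ∂μ, ∀ i, X i ω ∈ S)
    (hindep : iIndepFun X μ)
    (H : Fin n → Set Ω) (hmH : ∀ i, MeasurableSet (H i))
    (hdisj : ∀ i j, i ≠ j → Disjoint (H i) (H j))
    (p : ℝ → ℝ)
    (hIIF : ∀ i : Fin n, ∀ x ∈ S,
      (ProbabilityTheory.cond μ {ω | X i ω = x} (H i)).toReal = p x) :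
    ∫ ω, ∑ i : Fin n, Set.indicator (H i) (X i) ω ∂μ =
      ∑ i : Fin n, ∑ x ∈ S, x * (μ {ω | X i ω = x}).toReal * p x := by
  have hms : ∀ (i : Fin n) (x : ℝ), MeasurableSet ({ω | X i ω = x} ∩ H i) := fun i x =>
    ((hmX i) (measurableSet_singleton x)).inter (hmH i)
  -- key pointwise rewrite
  set g : Fin n → Ω → ℝ := fun i ω =>
    ∑ x ∈ S, Set.indicator ({ω' | X i ω' = x} ∩ H i) (fun _ => x) ω with hg
  have hae : ∀ i, Set.indicator (H i) (X i) =ᵐ[μ] g i := by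
    intro i
    filter_upwards [hsupp] with ω hω
    simp only [hg]
    by_cases hH : ω ∈ H i
    · rw [Set.indicator_of_mem hH]
      rw [Finset.sum_eq_single (X i ω)]
      · simp [Set.indicator_of_mem, hH]
      · intro b _ hb
        rw [Set.indicator_of_notMem]
        simp only [Set.mem_inter_iff, Set.mem_setOf_eq]
        tauto
      · exact fun h => absurd (hω i) h
    · rw [Set.indicator_of_notMem hH]
      refine (Finset.sum_eq_zero ?_).symm
      intro x _
      rw [Set.indicator_of_notMem]
      simp only [Set.mem_inter_iff, Set.mem_setOf_eq]
      tauto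
  have hint : ∀ i, Integrable (g i) μ := by
    intro i
    refine integrable_finset_sum _ fun x _ => ?_
    exact (integrable_const x).indicator (hms i x)
  have hint' : ∀ i, Integrable (Set.indicator (H i) (X i)) μ := fun i =>
    (hint i).congr (hae i).symm
  rw [integral_finset_sum _ fun i _ => hint' i]
  refine Finset.sum_congr rfl fun i _ => ?_
  rw [integral_congr_ae (hae i), integral_finset_sum _ fun x _ => (integrable_const x).indicator (hms i x)]
  refine Finset.sum_congr rfl fun x hx => ?_
  rw [integral_indicator_const _ (hms i x)]
  -- now compute the measure of the intersection via cond
  have hcond := hIIF i x hx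
  have hm : MeasurableSet {ω | X i ω = x} := (hmX i) (measurableSet_singleton x)
  rw [cond_apply hm] at hcond
  set a := μ {ω | X i ω = x} with ha
  set b := μ ({ω | X i ω = x} ∩ H i) with hb
  have hba : b ≤ a := measure_mono Set.inter_subset_left
  have hane : a ≠ ⊤ := (measure_lt_top μ _).ne
  by_cases h0 : a = 0
  · have hb0 : b = 0 := le_antisymm (h0 ▸ hba) zero_le
    simp [h0, hb0, measureReal_def, ← hb]
  · have hbne : b ≠ ⊤ := (lt_of_le_of_lt hba (measure_lt_top μ _)).ne
    rw [ENNReal.toReal_mul, ENNReal.toReal_inv] at hcond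
    have hat : a.toReal ≠ 0 := by
      simp [ENNReal.toReal_ne_zero, h0, hane]
    have : b.toReal = a.toReal * p x := by
      rw [← hcond]; field_simp
    rw [measureReal_def, ← hb, this, smul_eq_mul]; ring
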